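/- Let H be a graph with maximum degree at most Δ, let v be a vertex of H, and let s ≥ 1. Then the number of vertex subsets S of H with v ∈ S, |S| = s, and H[S] connected is at most e·(eΔ)^{s-1}. -/

import Mathlib

noncomputable def goL {V : Type*} (Δ : ℕ) (nbr : V → ℕ → Option V) :
    List ℕ → List V → List V
  | [], L => L
  | x :: xs, L =>
    match L[x / Δ]? with
    | none => goL Δ nbr xs L
    | some u =>
      match nbr u (x % Δ) with
      | none => goL Δ nbr xs L
      | some w => goL Δ nbr xs (L ++ [w])

lemma goL_cons_of {V : Type*} (Δ : ℕ) (nbr : V → ℕ → Option V) {x : ℕ}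
    {xs : List ℕ} {L : List V} {u w : V} (hu : L[x / Δ]? = some u)
    (hw : nbr u (x % Δ) = some w) :
    goL Δ nbr (x :: xs) L = goL Δ nbr xs (L ++ [w]) := by
  simp only [goL, hu, hw]

lemma goL_append {V : Type*} (Δ : ℕ) (nbr : V → ℕ → Option V) :
    ∀ (xs ys : List ℕ) (L : List V),
      goL Δ nbr (xs ++ ys) L = goL Δ nbr ys (goL Δ nbr xs L)
  | [], ys, L => rfl
  | x :: xs, ys, L => by
    show goL Δ nbr (x :: (xs ++ ys)) L = _
    cases h : L[x / Δ]? with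
    | none => simp only [goL, h]; exact goL_append Δ nbr xs ys L
    | some u => cases h2 : nbr u (x % Δ) with
      | none => simp only [goL, h, h2]; exact goL_append Δ nbr xs ys L
      | some w => simp only [goL, h, h2]; exact goL_append Δ nbr xs ys (L ++ [w])



lemma pow_self_le_exp_mul_factorial (n : ℕ) :
    (n : ℝ) ^ n ≤ Real.exp 1 ^ n * (n.factorial : ℝ) := by
  induction n with
  | zero => simp
  | succ n ih =>
    rcases Nat.eq_zero_or_pos n with h | h
    · subst h
      simpa using Real.one_le_exp (by norm_num : (0:ℝ) ≤ 1)
    · have hn : (0:ℝ) < n := by exact_mod_cast h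
      have key : ((n:ℝ) + 1) ^ n ≤ Real.exp 1 * (n:ℝ) ^ n := by
        have h1 : (1 + 1 / (n:ℝ)) ≤ Real.exp (1 / n) := by
          have := Real.add_one_le_exp (1 / (n:ℝ))
          linarith
        have h2 : (1 + 1 / (n:ℝ)) ^ n ≤ Real.exp (1 / n) ^ n :=
          pow_le_pow_left₀ (by positivity) h1 n
        have h3 : Real.exp (1 / (n:ℝ)) ^ n = Real.exp 1 := by
          rw [← Real.exp_nat_mul]
          congr 1
          field_simp
        calc ((n:ℝ) + 1) ^ n = ((1 + 1 / (n:ℝ)) * n) ^ n := by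
              congr 1; field_simp
          _ = (1 + 1 / (n:ℝ)) ^ n * (n:ℝ) ^ n := by rw [mul_pow]
          _ ≤ Real.exp 1 * (n:ℝ) ^ n := by
              rw [← h3]; exact mul_le_mul_of_nonneg_right h2 (by positivity)
      have e1 : (0:ℝ) < Real.exp 1 := Real.exp_pos 1
      have hc : ((n+1 : ℕ) : ℝ) = (n:ℝ) + 1 := by push_cast; ring
      rw [hc]
      calc ((n:ℝ) + 1) ^ (n + 1) = ((n:ℝ) + 1) * ((n:ℝ)+1) ^ n := by ring
        _ ≤ ((n:ℝ) + 1) * (Real.exp 1 * (n:ℝ) ^ n) :=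
            mul_le_mul_of_nonneg_left key (by positivity)
        _ ≤ ((n:ℝ) + 1) * (Real.exp 1 * (Real.exp 1 ^ n * n.factorial)) := by
            apply mul_le_mul_of_nonneg_left _ (by positivity)
            exact mul_le_mul_of_nonneg_left ih (le_of_lt e1)
        _ = Real.exp 1 ^ (n+1) * (((n:ℝ)+1) * n.factorial) := by ring
        _ = Real.exp 1 ^ (n+1) * ((n+1).factorial : ℝ) := by
            rw [Nat.factorial_succ]; push_cast; ring

lemma choose_bound (Δ s : ℕ) (hs : 1 ≤ s) :
    ((Nat.choose (s * Δ) (s - 1) : ℕ) : ℝ) ≤ Real.exp 1 * (Real.exp 1 * Δ) ^ (s - 1) := by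
  obtain ⟨k, rfl⟩ : ∃ k, s = k + 1 := ⟨s - 1, (Nat.succ_pred_eq_of_pos hs).symm⟩
  simp only [Nat.add_sub_cancel]
  have h1 : (Nat.choose ((k+1) * Δ) k) * k.factorial ≤ ((k+1) * Δ) ^ k := by
    calc Nat.choose ((k+1) * Δ) k * k.factorial = k.factorial * Nat.choose ((k+1)*Δ) k := by ring
      _ = ((k+1)*Δ).descFactorial k := (Nat.descFactorial_eq_factorial_mul_choose _ _).symm
      _ ≤ ((k+1) * Δ) ^ k := Nat.descFactorial_le_pow _ _
  have h1' : ((Nat.choose ((k+1) * Δ) k : ℕ) : ℝ) * k.factorial ≤ (((k:ℝ)+1) * Δ) ^ k := by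
    exact_mod_cast h1
  have hf : (0:ℝ) < k.factorial := by exact_mod_cast k.factorial_pos
  have h2' : (((k:ℝ)+1)) ^ k ≤ Real.exp 1 ^ (k+1) * (k.factorial : ℝ) := by
    have hmain := pow_self_le_exp_mul_factorial (k+1)
    have hk1 : ((k+1:ℕ):ℝ) = (k:ℝ)+1 := by push_cast; ring
    rw [hk1, Nat.factorial_succ] at hmain
    push_cast at hmain
    have hkpos : (0:ℝ) < (k:ℝ)+1 := by positivity
    have h5 : ((k:ℝ)+1) * ((k:ℝ)+1)^k ≤ ((k:ℝ)+1) * (Real.exp 1 ^ (k+1) * k.factorial) := by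
      calc ((k:ℝ)+1) * ((k:ℝ)+1)^k = ((k:ℝ)+1)^(k+1) := by ring
        _ ≤ Real.exp 1 ^ (k + 1) * (((k:ℝ) + 1) * k.factorial) := hmain
        _ = ((k:ℝ)+1) * (Real.exp 1 ^ (k+1) * k.factorial) := by ring
    exact le_of_mul_le_mul_left h5 hkpos
  have goal' : ((Nat.choose ((k+1) * Δ) k : ℕ) : ℝ) * k.factorial
      ≤ Real.exp 1 ^ (k+1) * (Δ:ℝ)^k * k.factorial := by
    calc ((Nat.choose ((k+1) * Δ) k : ℕ) : ℝ) * k.factorial ≤ (((k:ℝ)+1) * Δ) ^ k := h1'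
      _ = ((k:ℝ)+1) ^ k * (Δ:ℝ)^k := by rw [mul_pow]
      _ ≤ (Real.exp 1 ^ (k+1) * k.factorial) * (Δ:ℝ)^k :=
          mul_le_mul_of_nonneg_right h2' (by positivity)
      _ = Real.exp 1 ^ (k+1) * (Δ:ℝ)^k * k.factorial := by ring
  have hfin := (mul_le_mul_iff_of_pos_right hf).mp goal'
  calc ((Nat.choose ((k+1) * Δ) k : ℕ) : ℝ) ≤ Real.exp 1 ^ (k+1) * (Δ:ℝ)^k := hfin
    _ = Real.exp 1 * (Real.exp 1 * Δ) ^ k := by rw [mul_pow, pow_succ]; ring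
/-- filtering `range N` by membership in a strictly sorted bounded list returns the list. -/
lemma filter_range_toFinset (P : List ℕ) (N : ℕ) (hP : P.Pairwise (· < ·))
    (hb : ∀ x ∈ P, x < N) :
    (List.range N).filter (fun x => decide (x ∈ P.toFinset)) = P := by
  have hs1 : ((List.range N).filter (fun x => decide (x ∈ P.toFinset))).Pairwise (· < ·) :=
    List.pairwise_lt_range.filter _
  have hnd1 : ((List.range N).filter (fun x => decide (x ∈ P.toFinset))).Nodup :=
    ((List.nodup_range).filter _)
  have hndP : P.Nodup := hP.nodup
  have hmem : ∀ x, x ∈ (List.range N).filter (fun x => decide (x ∈ P.toFinset)) ↔ x ∈ P := by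
    intro x
    simp only [List.mem_filter, List.mem_range, decide_eq_true_eq, List.mem_toFinset]
    exact ⟨fun h => h.2, fun h => ⟨hb x h, h⟩⟩
  have hperm : List.Perm ((List.range N).filter (fun x => decide (x ∈ P.toFinset))) P := by
    apply List.perm_of_nodup_nodup_toFinset_eq hnd1 hndP
    ext x
    simp only [List.mem_toFinset, List.mem_filter, List.mem_range, decide_eq_true_eq]
    exact ⟨fun h => h.2, fun h => ⟨hb x h, h⟩⟩
  haveI : IsAntisymm ℕ (· < ·) := ⟨fun a b h1 h2 => absurd h1 (lt_asymm h2)⟩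
  exact List.Pairwise.eq_of_mem_iff hs1 hP hmem

open Classical in
lemma exists_code {V : Type*} [Fintype V] (H : SimpleGraph V) [DecidableRel H.Adj]
    (Δ : ℕ) (hΔ : ∀ u : V, H.degree u ≤ Δ) (v : V) (s : ℕ) (hs : 1 ≤ s)
    (S : Finset V) (hv : v ∈ S) (hcard : S.card = s)
    (hconn : (H.induce (S : Set V)).Connected) :
    ∃ P : List ℕ, P.Pairwise (· < ·) ∧ (∀ x ∈ P, x < s * Δ) ∧ P.length = s - 1 ∧
      (goL Δ (fun u j => (H.neighborFinset u).toList[j]?) P [v]).toFinset = S := by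
  set nbr : V → ℕ → Option V := fun u j => (H.neighborFinset u).toList[j]? with hnbr
  -- basic facts about nbr
  have hnbr_mem : ∀ u j w, nbr u j = some w → H.Adj u w ∧ j < Δ := by
    intro u j w h
    have hj : j < (H.neighborFinset u).toList.length := (List.getElem?_eq_some_iff.mp h).1
    have hw : w ∈ (H.neighborFinset u).toList := by
      obtain ⟨hlt, he⟩ := List.getElem?_eq_some_iff.mp h
      exact he ▸ List.getElem_mem hlt
    rw [Finset.mem_toList, SimpleGraph.mem_neighborFinset] at hw
    rw [Finset.length_toList] at hj
    exact ⟨hw, lt_of_lt_of_le hj (hΔ u)⟩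
  have hnbr_ex : ∀ u w, H.Adj u w → ∃ j, nbr u j = some w := by
    intro u w h
    have : w ∈ (H.neighborFinset u).toList := by
      rw [Finset.mem_toList, SimpleGraph.mem_neighborFinset]; exact h
    exact List.mem_iff_getElem?.mp this
  -- availability predicate
  set Avail : List V → ℕ → Prop := fun L x =>
    ∃ u, L[x / Δ]? = some u ∧ ∃ w, nbr u (x % Δ) = some w ∧ w ∈ S ∧ w ∉ L with hAvail
  -- avail implies bound
  have avail_lt : ∀ L x, Avail L x → x < L.length * Δ := by
    intro L x ⟨u, hu, w, hw, _, _⟩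
    have h1 : x / Δ < L.length := (List.getElem?_eq_some_iff.mp hu).1
    have h2 : x % Δ < Δ := (hnbr_mem u _ w hw).2
    have h3 : Δ * (x / Δ) + x % Δ = x := Nat.div_add_mod x Δ
    calc x = Δ * (x / Δ) + x % Δ := h3.symm
      _ < Δ * (x / Δ) + Δ := by omega
      _ = Δ * (x / Δ + 1) := by ring
      _ ≤ Δ * L.length := Nat.mul_le_mul_left Δ h1
      _ = L.length * Δ := Nat.mul_comm _ _
  -- main invariant
  have INV : ∀ k, k ≤ s - 1 → ∃ P : List ℕ, ∃ L : List V,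
      P.Pairwise (· < ·) ∧ (∀ x ∈ P, x < s * Δ) ∧
      goL Δ nbr P [v] = L ∧ L.length = k + 1 ∧ P.length = k ∧
      L.Nodup ∧ (∀ a ∈ L, a ∈ S) ∧ v ∈ L ∧
      (∀ x, Avail L x → ∀ y ∈ P, y < x) := by
    intro k
    induction k with
    | zero =>
      intro _
      exact ⟨[], [v], List.Pairwise.nil, by simp, rfl, rfl, rfl, List.nodup_singleton v,
        by simpa using hv, by simp, by simp⟩
    | succ k ih =>
      intro hk1
      obtain ⟨P, L, hsort, hbd, hgo, hlen, hPlen, hnd, hLS, hvL, havp⟩ :=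
        ih (Nat.le_of_succ_le hk1)
      have hk1s : k + 1 < s := by omega
      have hLcard : L.toFinset.card = k + 1 := by
        rw [List.toFinset_card_of_nodup hnd, hlen]
      -- find a vertex of S outside L
      have hex_b : ∃ b ∈ S, b ∉ L.toFinset := by
        by_contra hcon
        push_neg at hcon
        have hsub : S ⊆ L.toFinset := fun b hb => hcon b hb
        have := Finset.card_le_card hsub
        omega
      obtain ⟨b, hbS, hbL⟩ := hex_b
      -- boundary edge
      have hreach := hconn.preconnected ⟨v, hv⟩ ⟨b, hbS⟩
      obtain ⟨p⟩ := hreach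
      obtain ⟨d, _, hd1, hd2⟩ := p.exists_boundary_dart {x : (S : Set V) | (x : V) ∈ L.toFinset}
        (by simpa using List.mem_toFinset.mpr hvL) (by simpa using hbL)
      have hadj : H.Adj (d.fst : V) (d.snd : V) := by have := d.adj; simpa using this
      set u1 : V := (d.fst : V)
      set w1 : V := (d.snd : V)
      have hu1L : u1 ∈ L := List.mem_toFinset.mp hd1
      have hw1S : w1 ∈ S := d.snd.2
      have hw1L : w1 ∉ L := fun hc => hd2 (List.mem_toFinset.mpr hc)
      obtain ⟨i, hiL⟩ := List.mem_iff_getElem?.mp hu1L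
      obtain ⟨j, hjw⟩ := hnbr_ex u1 w1 hadj
      have hjΔ : j < Δ := (hnbr_mem u1 j w1 hjw).2
      have hΔpos : 0 < Δ := by omega
      have hiL' : i < L.length := (List.getElem?_eq_some_iff.mp hiL).1
      -- the available pair
      have hdiv : (Δ * i + j) / Δ = i := by
        rw [Nat.mul_add_div hΔpos, Nat.div_eq_of_lt hjΔ]
        omega
      have hmod : (Δ * i + j) % Δ = j := by
        rw [Nat.mul_add_mod, Nat.mod_eq_of_lt hjΔ]
      have hx0avail : Avail L (Δ * i + j) := by
        refine ⟨u1, ?_, w1, ?_, hw1S, hw1L⟩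
        · rw [hdiv]; exact hiL
        · rw [hmod]; exact hjw
      -- the set of available pairs
      set A : Finset ℕ := (Finset.range (s * Δ)).filter (fun x => Avail L x) with hA
      have hmemA : ∀ x, x ∈ A ↔ x < s * Δ ∧ Avail L x := by
        intro x; simp [hA, Finset.mem_filter, Finset.mem_range]
      have hx0A : (Δ * i + j) ∈ A := by
        rw [hmemA]
        refine ⟨?_, hx0avail⟩
        have := avail_lt L _ hx0avail
        have hLs : L.length ≤ s := by omega
        calc Δ * i + j < L.length * Δ := this
          _ ≤ s * Δ := Nat.mul_le_mul_right Δ hLs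
      have hAne : A.Nonempty := ⟨_, hx0A⟩
      set xm : ℕ := A.min' hAne with hxm
      have hxmA : xm ∈ A := A.min'_mem hAne
      have hxmlt : xm < s * Δ := ((hmemA xm).mp hxmA).1
      have hxmavail : Avail L xm := ((hmemA xm).mp hxmA).2
      have hmin : ∀ x ∈ A, xm ≤ x := fun x hx => A.min'_le x hx
      obtain ⟨u0, hu0, w0, hw0, hw0S, hw0L⟩ := hxmavail
      -- the new lists
      refine ⟨P ++ [xm], L ++ [w0], ?_, ?_, ?_, ?_, ?_, ?_, ?_, ?_, ?_⟩
      · rw [List.pairwise_append]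
        refine ⟨hsort, List.pairwise_singleton _ xm, ?_⟩
        intro a ha bb hbb
        rw [List.mem_singleton] at hbb
        subst hbb
        exact havp xm ⟨u0, hu0, w0, hw0, hw0S, hw0L⟩ a ha
      · intro x hx
        rw [List.mem_append, List.mem_singleton] at hx
        rcases hx with hx | hx
        · exact hbd x hx
        · subst hx; exact hxmlt
      · rw [goL_append, hgo, goL_cons_of Δ nbr hu0 hw0]; rfl
      · simp [hlen]
      · simp [hPlen]
      · rw [List.nodup_append]
        exact ⟨hnd, List.nodup_singleton w0, by intro a ha b hb; rw [List.mem_singleton] at hb; subst hb; exact fun h => hw0L (h ▸ ha)⟩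
      · intro a ha
        rw [List.mem_append, List.mem_singleton] at ha
        rcases ha with ha | ha
        · exact hLS a ha
        · subst ha; exact hw0S
      · exact List.mem_append_left _ hvL
      · -- new availability property
        intro x' hx' y hy
        obtain ⟨u', hu', w', hw', hw'S, hw'L'⟩ := hx'
        have hidx : x' / Δ < L.length + 1 := by
          have := (List.getElem?_eq_some_iff.mp hu').1
          simpa using this
        have hjlt : x' % Δ < Δ := (hnbr_mem u' _ w' hw').2
        rw [List.mem_append, List.mem_singleton] at hy
        rcases Nat.lt_or_ge (x' / Δ) L.length with hcase | hcase
        · -- parent inside old list: x' was available before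
          have hu'L : L[x' / Δ]? = some u' := by
            rw [List.getElem?_append, if_pos hcase] at hu'
            exact hu'
          have hw'L : w' ∉ L := fun hc => hw'L' (List.mem_append_left _ hc)
          have havx' : Avail L x' := ⟨u', hu'L, w', hw', hw'S, hw'L⟩
          have hx'A : x' ∈ A := by
            rw [hmemA]
            refine ⟨?_, havx'⟩
            have := avail_lt L _ havx'
            have hLs : L.length ≤ s := by omega
            calc x' < L.length * Δ := this
              _ ≤ s * Δ := Nat.mul_le_mul_right Δ hLs
          have hle : xm ≤ x' := hmin x' hx'A
          have hne : xm ≠ x' := by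
            intro he
            subst he
            rw [hu0] at hu'L
            injection hu'L with he2
            subst he2
            rw [hw0] at hw'
            injection hw' with he3
            subst he3
            exact hw'L' (List.mem_append_right _ (List.mem_singleton_self _))
          rcases hy with hy | hy
          · exact havp x' havx' y hy
          · subst hy; omega
        · -- parent is the new vertex: x' is large
          have hx'ge : Δ * L.length ≤ x' := by
            have h1 : L.length ≤ x' / Δ := hcase
            calc Δ * L.length ≤ Δ * (x' / Δ) := Nat.mul_le_mul_left Δ h1
              _ ≤ x' := Nat.mul_div_le x' Δ
          have hxmlt' : xm < Δ * L.length := by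
            rw [Nat.mul_comm]
            exact avail_lt L xm ⟨u0, hu0, w0, hw0, hw0S, hw0L⟩
          have hxmx' : xm < x' := by omega
          rcases hy with hy | hy
          · have : y < xm := havp xm ⟨u0, hu0, w0, hw0, hw0S, hw0L⟩ y hy
            omega
          · subst hy; omega
  -- conclude
  obtain ⟨P, L, hsort, hbd, hgo, hlen, hPlen, hnd, hLS, _, _⟩ := INV (s - 1) le_rfl
  have hlen' : L.length = s := by omega
  have hLfin : L.toFinset = S := by
    apply Finset.eq_of_subset_of_card_le
    · intro a ha; exact hLS a (List.mem_toFinset.mp ha)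
    · rw [List.toFinset_card_of_nodup hnd, hlen', hcard]
  exact ⟨P, hsort, hbd, hPlen, by rw [hgo, hLfin]⟩

open Classical in
/-- The number of vertex subsets `S` containing `v`, of size `s`, inducing a connected
subgraph of a graph `H` of maximum degree at most `Δ`, is at most `e·(eΔ)^(s-1)`. -/
theorem connected_sets_count_le
    {V : Type*} [Fintype V] (H : SimpleGraph V) [DecidableRel H.Adj]
    (Δ : ℕ) (hΔ : ∀ v : V, H.degree v ≤ Δ)
    (v : V) (s : ℕ) (hs : 1 ≤ s) :
    ({S : Finset V | v ∈ S ∧ S.card = s ∧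
        (H.induce (S : Set V)).Connected}.ncard : ℝ)
      ≤ Real.exp 1 * (Real.exp 1 * Δ) ^ (s - 1) := by
  classical
  set nbr : V → ℕ → Option V := fun u j => (H.neighborFinset u).toList[j]? with hnbr
  set T : Finset (Finset ℕ) := (Finset.range (s * Δ)).powersetCard (s - 1) with hT
  set decode : Finset ℕ → Finset V := fun B =>
    (goL Δ nbr ((List.range (s * Δ)).filter (fun x => decide (x ∈ B))) [v]).toFinset
    with hdecode
  set 𝒮 : Set (Finset V) := {S : Finset V | v ∈ S ∧ S.card = s ∧
      (H.induce (S : Set V)).Connected} with h𝒮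
  have hex : ∀ S ∈ 𝒮, ∃ B : Finset ℕ, B ∈ T ∧ decode B = S := by
    rintro S ⟨hv, hcard, hconn⟩
    obtain ⟨P, hsort, hbd, hPlen, hgoal⟩ := exists_code H Δ hΔ v s hs S hv hcard hconn
    refine ⟨P.toFinset, ?_, ?_⟩
    · rw [hT, Finset.mem_powersetCard]
      constructor
      · intro x hx
        rw [List.mem_toFinset] at hx
        rw [Finset.mem_range]
        exact hbd x hx
      · rw [List.toFinset_card_of_nodup hsort.nodup, hPlen]
    · rw [hdecode]
      have hfilt : (List.range (s * Δ)).filter (fun x => decide (x ∈ P.toFinset)) = P :=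
        filter_range_toFinset P (s * Δ) hsort hbd
      show (goL Δ nbr ((List.range (s * Δ)).filter (fun x => decide (x ∈ P.toFinset))) [v]).toFinset = S
      rw [hfilt]
      exact hgoal
  set f : Finset V → Finset ℕ := fun S =>
    if h : ∃ B : Finset ℕ, B ∈ T ∧ decode B = S then h.choose else ∅ with hf
  have hmaps : ∀ S ∈ 𝒮, f S ∈ (T : Set (Finset ℕ)) := by
    intro S hS
    have h := hex S hS
    rw [hf]
    simp only [dif_pos h]
    exact h.choose_spec.1
  have hinj : Set.InjOn f 𝒮 := by
    intro S1 h1 S2 h2 hf12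
    have he1 := hex S1 h1
    have he2 := hex S2 h2
    rw [hf] at hf12
    simp only [dif_pos he1, dif_pos he2] at hf12
    have d1 := he1.choose_spec.2
    have d2 := he2.choose_spec.2
    rw [← d1, ← d2, hf12]
  have hcount : 𝒮.ncard ≤ T.card := by
    have hfin : (T : Set (Finset ℕ)).Finite := T.finite_toSet
    have := Set.ncard_le_ncard_of_injOn f hmaps hinj hfin
    rwa [Set.ncard_coe_finset] at this
  have hTcard : T.card = Nat.choose (s * Δ) (s - 1) := by
    rw [hT, Finset.card_powersetCard, Finset.card_range]
  calc (𝒮.ncard : ℝ) ≤ (Nat.choose (s * Δ) (s - 1) : ℝ) := by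
        rw [← hTcard]; exact_mod_cast hcount
    _ ≤ Real.exp 1 * (Real.exp 1 * Δ) ^ (s - 1) := choose_bound Δ s hs
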